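/- Let B be a bounded quasinilpotent operator on a Hilbert space H and f, g ∈ H. Define g(z) := (I − zB)⁻¹ g, f_*(z) := (I + zB*)⁻¹ f, and φ(z) := 1 − z⟨g(z), f⟩. Then for all λ, μ ∈ ℂ with λ ≠ μ: ⟨g(λ), f_*(−conj(μ))⟩ = (φ(λ) − φ(μ))/(μ − λ). -/

import Mathlib

theorem biorthogonality_identity
    {H : Type*} [NormedAddCommGroup H] [InnerProductSpace ℂ H] [CompleteSpace H]
    (B : H →L[ℂ] H) (hB : spectrum ℂ B = {0}) (f g : H)
    (gfun : ℂ → H) (hg : ∀ z : ℂ, gfun z = (Ring.inverse (1 - z • B) : H →L[ℂ] H) g)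
    (fstar : ℂ → H)
    (hf : ∀ w : ℂ,
      fstar w = (Ring.inverse (1 + w • ContinuousLinearMap.adjoint B) : H →L[ℂ] H) f)
    (φ : ℂ → ℂ) (hφ : ∀ z : ℂ, φ z = 1 - z * (inner ℂ f (gfun z) : ℂ)) :
    ∀ lam mu : ℂ, lam ≠ mu →
      (inner ℂ (fstar (-(starRingEnd ℂ mu))) (gfun lam) : ℂ) = (φ lam - φ mu) / (mu - lam) := by
  -- every 1 - z • B is a unit
  have hunit : ∀ z : ℂ, IsUnit ((1 : H →L[ℂ] H) - z • B) := by
    intro z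
    rcases eq_or_ne z 0 with rfl | hz
    · simp only [zero_smul, sub_zero]; exact isUnit_one
    · have h1 : (1 : ℂ) ∉ spectrum ℂ (z • B) := by
        have := spectrum.unit_smul_eq_smul (R := ℂ) (A := H →L[ℂ] H) B (Units.mk0 z hz)
        rw [hB] at this
        have : spectrum ℂ (z • B) = {0} := by
          simpa [Set.smul_set_singleton] using this
        simp [this]
      have := spectrum.notMem_iff.mp h1
      simpa [Algebra.algebraMap_eq_smul_one] using this
  intro lam mu hne
  set u : H →L[ℂ] H := 1 - lam • B with hu_def
  set v : H →L[ℂ] H := 1 - mu • B with hv_def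
  have hu := hunit lam
  have hv := hunit mu
  set Rl : H →L[ℂ] H := Ring.inverse u with hRl
  set S : H →L[ℂ] H := Ring.inverse v with hS
  set x : H := Rl g with hx
  -- fstar term is adjoint of S applied to f
  have hstarv : (1 : H →L[ℂ] H) + (-(starRingEnd ℂ mu)) • ContinuousLinearMap.adjoint B
      = star v := by
    simp [hv_def, star_sub, star_smul, ContinuousLinearMap.star_eq_adjoint, sub_eq_add_neg,
      neg_smul]
  have hfs : fstar (-(starRingEnd ℂ mu)) = (star S) f := by
    rw [hf, hstarv, hS, Ring.inverse_star]
  -- basic resolvent relations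
  have h1 : u x = g := by
    have := congrArg (fun T : H →L[ℂ] H => T g) (Ring.mul_inverse_cancel u hu)
    simpa [ContinuousLinearMap.mul_apply, hx, hRl] using this
  have h2 : ∀ y : H, S (v y) = y := by
    intro y
    have := congrArg (fun T : H →L[ℂ] H => T y) (Ring.inverse_mul_cancel v hv)
    simpa [ContinuousLinearMap.mul_apply, hS] using this
  have hSg : S g = S (u x) := by rw [h1]
  -- key vector identity
  have hkey : mu • S g - lam • x = (mu - lam) • S x := by
    have hx2 : x = S (v x) := (h2 x).symm
    calc mu • S g - lam • x = S (mu • u x) - S (lam • v x) := by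
          rw [hSg, map_smul, map_smul, ← hx2]
      _ = S (mu • u x - lam • v x) := by rw [map_sub]
      _ = S ((mu - lam) • x) := by
          congr 1
          simp only [hu_def, hv_def, ContinuousLinearMap.sub_apply,
            ContinuousLinearMap.smul_apply, ContinuousLinearMap.one_apply]
          rw [smul_sub, smul_sub, smul_smul, smul_smul, mul_comm mu lam, sub_smul]
          abel
      _ = (mu - lam) • S x := map_smul _ _ _
  -- now the inner product computation
  have hml : mu - lam ≠ 0 := sub_ne_zero.mpr (Ne.symm hne)
  rw [hfs, hg, ContinuousLinearMap.star_eq_adjoint, ContinuousLinearMap.adjoint_inner_left,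
    ← hRl, ← hx]
  rw [eq_div_iff hml]
  have : (inner ℂ f (S x) : ℂ) * (mu - lam) = inner ℂ f ((mu - lam) • S x) := by
    rw [inner_smul_right]; ring
  rw [this, ← hkey, inner_sub_right, inner_smul_right, inner_smul_right]
  rw [hφ, hφ, hg, hg, ← hRl, ← hx, ← hS]
  ring
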